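/- arXiv:0812.4666 — 2 statements merged into one kernel-verified Lean document; each statement's English description precedes it below -/
import Mathlib

section
/- Let α, β be real numbers with -1/2 < α < β. Then for every λ ∈ ℂ and every x ∈ ℝ, E_β(λx) = a_{α,β} ∫_{-1}^{1} E_α(λxt)(1-t²)^{β-α-1}(1+t)|t|^{2α+1} dt, where a_{α,β} = Γ(β+1)/(Γ(β-α)Γ(α+1)). -/
open MeasureTheory Filter
open scoped Real

noncomputable section

/-- The coefficients `b_n(α)` in the power series of the Dunkl kernel. -/
def bCoeff (α : ℝ) (n : ℕ) : ℝ :=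
  if n % 2 = 0 then
    2 ^ n * (n / 2).factorial * Real.Gamma ((n / 2 : ℕ) + α + 1) / Real.Gamma (α + 1)
  else
    2 ^ n * (n / 2).factorial * Real.Gamma ((n / 2 : ℕ) + α + 2) / Real.Gamma (α + 1)

/-- The Dunkl kernel `E_α`, as an entire function of a complex variable. -/
def dunklKernel (α : ℝ) (z : ℂ) : ℂ := ∑' n : ℕ, z ^ n / (bCoeff α n : ℂ)

/-- The constant `a_{α,β}`. -/
def sonineConst (α β : ℝ) : ℝ :=
  Real.Gamma (β + 1) / (Real.Gamma (β - α) * Real.Gamma (α + 1))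

/-- The Dunkl Sonine transform `S_{α,β}`. -/
def sonine (α β : ℝ) (f : ℝ → ℂ) (x : ℝ) : ℂ :=
  (sonineConst α β : ℂ) *
    ∫ t in (-1 : ℝ)..1, f (x * t) *
      (((1 - t ^ 2) ^ (β - α - 1) * (1 + t) * |t| ^ (2 * α + 1) : ℝ) : ℂ)

/-- The dual Dunkl Sonine transform `ᵗS_{α,β}`. -/
def dualSonine (α β : ℝ) (f : ℝ → ℂ) (x : ℝ) : ℂ :=
  (sonineConst α β : ℂ) *
    ∫ y in {y : ℝ | |x| ≤ |y|},
      ((Real.sign y * (y ^ 2 - x ^ 2) ^ (β - α - 1) * (x + y) : ℝ) : ℂ) * f y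

/-- The Dunkl transform `F_α`. -/
def dunklTransform (α : ℝ) (f : ℝ → ℂ) (ξ : ℝ) : ℂ :=
  ∫ x : ℝ, dunklKernel α (-(Complex.I * ξ * x)) * f x * ((|x| ^ (2 * α + 1) : ℝ) : ℂ)

/-- The constant `a_α`. -/
def intertwinerConst (α : ℝ) : ℝ :=
  Real.Gamma (α + 1) / (Real.sqrt π * Real.Gamma (α + 1 / 2))

/-- The Dunkl intertwining operator `V_α`. -/
def dunklIntertwiner (α : ℝ) (f : ℝ → ℂ) (x : ℝ) : ℂ :=
  (intertwinerConst α : ℂ) *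
    ∫ t in (-1 : ℝ)..1, f (x * t) * (((1 - t ^ 2) ^ (α - 1 / 2) * (1 + t) : ℝ) : ℂ)

/-- The dual Dunkl intertwining operator `ᵗV_α`. -/
def dualIntertwiner (α : ℝ) (f : ℝ → ℂ) (x : ℝ) : ℂ :=
  (intertwinerConst α : ℂ) *
    ∫ y in {y : ℝ | |x| ≤ |y|},
      ((Real.sign y * (y ^ 2 - x ^ 2) ^ (α - 1 / 2) * (x + y) : ℝ) : ℂ) * f y

/-- The Dunkl operator `Λ_γ`. -/
def dunklOp (γ : ℝ) (f : ℝ → ℂ) (x : ℝ) : ℂ :=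
  if x = 0 then ((2 * γ + 2 : ℝ) : ℂ) * deriv f 0
  else deriv f x + (((2 * γ + 1) / x : ℝ) : ℂ) * ((f x - f (-x)) / 2)

/-- The Lizorkin moment condition defining the space `Φ_γ` (within the Schwartz space). -/
def lizorkin (γ : ℝ) (f : ℝ → ℂ) : Prop :=
  ∀ k : ℕ, ∫ y : ℝ, f y * ((y ^ k * |y| ^ (2 * γ + 1) : ℝ) : ℂ) = 0

/-- The constant `c_γ`. -/
def cConst (γ : ℝ) : ℝ := 1 / (2 ^ (γ + 1) * Real.Gamma (γ + 1)) ^ 2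
namespace SonineAux

lemma bCoeff_two_mul (α : ℝ) (m : ℕ) :
    bCoeff α (2 * m) = 2 ^ (2 * m) * m.factorial * Real.Gamma (m + α + 1) / Real.Gamma (α + 1) := by
  simp [bCoeff, Nat.mul_mod_right, Nat.mul_div_cancel_left m (by norm_num : 0 < 2)]

lemma bCoeff_two_mul_add_one (α : ℝ) (m : ℕ) :
    bCoeff α (2 * m + 1)
      = 2 ^ (2 * m + 1) * m.factorial * Real.Gamma (m + α + 2) / Real.Gamma (α + 1) := by
  have h1 : (2 * m + 1) % 2 = 1 := by omega
  have h2 : (2 * m + 1) / 2 = m := by omega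
  simp [bCoeff, h1, h2]

lemma bCoeff_pos {α : ℝ} (hα : -1 < α) (n : ℕ) : 0 < bCoeff α n := by
  have hΓ : 0 < Real.Gamma (α + 1) := Real.Gamma_pos_of_pos (by linarith)
  rcases Nat.even_or_odd n with ⟨m, hm⟩ | ⟨m, hm⟩
  · rw [hm, ← two_mul, bCoeff_two_mul]
    have h0 : (0:ℝ) ≤ m := Nat.cast_nonneg m
    have : 0 < Real.Gamma (m + α + 1) :=
      Real.Gamma_pos_of_pos (by linarith)
    positivity
  · rw [hm, bCoeff_two_mul_add_one]
    have h0 : (0:ℝ) ≤ m := Nat.cast_nonneg m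
    have : 0 < Real.Gamma (m + α + 2) :=
      Real.Gamma_pos_of_pos (by linarith)
    positivity

/-- The real Beta integral. -/
lemma real_beta {a b : ℝ} (ha : 0 < a) (hb : 0 < b) :
    ∫ t in Set.Ioo (0:ℝ) 1, t ^ (a - 1) * (1 - t) ^ (b - 1)
      = Real.Gamma a * Real.Gamma b / Real.Gamma (a + b) := by
  have cast_eq : ∀ t ∈ Set.Ioo (0:ℝ) 1,
      ((t ^ (a - 1) * (1 - t) ^ (b - 1) : ℝ) : ℂ)
        = (t : ℂ) ^ ((a : ℂ) - 1) * (1 - (t : ℂ)) ^ ((b : ℂ) - 1) := by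
    rintro t ⟨ht0, ht1⟩
    rw [Complex.ofReal_mul, Complex.ofReal_cpow ht0.le, Complex.ofReal_cpow (by linarith)]
    push_cast
    ring_nf
  have key : Complex.betaIntegral a b
      = ((∫ t in Set.Ioo (0:ℝ) 1, t ^ (a - 1) * (1 - t) ^ (b - 1) : ℝ) : ℂ) := by
    rw [Complex.betaIntegral,
      intervalIntegral.integral_of_le (by norm_num : (0:ℝ) ≤ 1),
      MeasureTheory.integral_Ioc_eq_integral_Ioo]
    exact (setIntegral_congr_fun measurableSet_Ioo cast_eq).symm.trans integral_ofReal
  have hΓ : Complex.Gamma (a : ℂ) * Complex.Gamma (b : ℂ)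
      = Complex.Gamma ((a : ℂ) + b) * Complex.betaIntegral a b :=
    Complex.Gamma_mul_Gamma_eq_betaIntegral (by simpa using ha) (by simpa using hb)
  have hab : (0:ℝ) < Real.Gamma (a + b) := Real.Gamma_pos_of_pos (by linarith)
  rw [key] at hΓ
  have : ((a : ℂ) + b) = ((a + b : ℝ) : ℂ) := by push_cast; ring
  rw [this, Complex.Gamma_ofReal, Complex.Gamma_ofReal, Complex.Gamma_ofReal] at hΓ
  have := hΓ
  rw [← Complex.ofReal_mul, ← Complex.ofReal_mul] at this
  have h2 := Complex.ofReal_inj.mp this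
  field_simp
  linarith [h2]

lemma real_beta_integrable {a b : ℝ} (ha : 0 < a) (hb : 0 < b) :
    IntegrableOn (fun t : ℝ => t ^ (a - 1) * (1 - t) ^ (b - 1)) (Set.Ioo (0:ℝ) 1) := by
  have h := Complex.betaIntegral_convergent (u := (a:ℂ)) (v := (b:ℂ))
    (by simpa using ha) (by simpa using hb)
  rw [intervalIntegrable_iff_integrableOn_Ioo_of_le (by norm_num : (0:ℝ) ≤ 1)] at h
  have h2 : IntegrableOn
      (fun t : ℝ => ((t ^ (a - 1) * (1 - t) ^ (b - 1) : ℝ) : ℂ)) (Set.Ioo (0:ℝ) 1) := by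
    refine h.congr_fun (fun t ht => ?_) measurableSet_Ioo
    obtain ⟨ht0, ht1⟩ := ht
    rw [Complex.ofReal_mul, Complex.ofReal_cpow ht0.le, Complex.ofReal_cpow (by linarith)]
    push_cast
    ring_nf
  simpa [IntegrableOn] using (Complex.reCLM.integrable_comp h2).congr (by
    filter_upwards with t
    simp)


lemma sq_image : (fun t : ℝ => t ^ 2) '' Set.Ioo 0 1 = Set.Ioo 0 1 := by
  ext u
  simp only [Set.mem_image, Set.mem_Ioo]
  constructor
  · rintro ⟨t, ⟨ht0, ht1⟩, rfl⟩
    exact ⟨by positivity, by nlinarith⟩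
  · rintro ⟨hu0, hu1⟩
    refine ⟨Real.sqrt u, ⟨Real.sqrt_pos.mpr hu0, ?_⟩, Real.sq_sqrt hu0.le⟩
    rw [show (1:ℝ) = Real.sqrt 1 from (Real.sqrt_one).symm]
    exact Real.sqrt_lt_sqrt hu0.le hu1

lemma sq_injOn : Set.InjOn (fun t : ℝ => t ^ 2) (Set.Ioo 0 1) := by
  rintro a ⟨ha, _⟩ b ⟨hb, _⟩ h
  simp only at h
  nlinarith

lemma sq_deriv : ∀ t ∈ Set.Ioo (0:ℝ) 1,
    HasDerivWithinAt (fun t : ℝ => t ^ 2) (2 * t) (Set.Ioo 0 1) t := by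
  intro t _
  simpa using (hasDerivAt_pow 2 t).hasDerivWithinAt

lemma integral_sq_smul (g : ℝ → ℝ) :
    ∫ u in Set.Ioo (0:ℝ) 1, g u = ∫ t in Set.Ioo (0:ℝ) 1, |2 * t| • g (t ^ 2) := by
  have h := integral_image_eq_integral_abs_deriv_smul measurableSet_Ioo sq_deriv sq_injOn g
  rwa [sq_image] at h

lemma integrableOn_sq_iff (g : ℝ → ℝ) :
    IntegrableOn g (Set.Ioo (0:ℝ) 1) ↔
      IntegrableOn (fun t => |2 * t| • g (t ^ 2)) (Set.Ioo (0:ℝ) 1) := by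
  have h := integrableOn_image_iff_integrableOn_abs_deriv_smul measurableSet_Ioo sq_deriv sq_injOn g
  rwa [sq_image] at h

lemma sq_pointwise {c q : ℝ} : ∀ t ∈ Set.Ioo (0:ℝ) 1,
    |2 * t| • ((t ^ 2) ^ ((c - 1) / 2) * (1 - t ^ 2) ^ q) = 2 * (t ^ c * (1 - t ^ 2) ^ q) := by
  rintro t ⟨ht0, ht1⟩
  have habs : |2 * t| = 2 * t := abs_of_pos (by linarith)
  rw [smul_eq_mul, habs, ← Real.rpow_two, ← Real.rpow_mul ht0.le]
  have h1 : (2 : ℝ) * ((c - 1) / 2) = c - 1 := by ring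
  rw [h1]
  have hc' : t ^ c = t ^ (1:ℝ) * t ^ (c - 1) := by
    rw [← Real.rpow_add ht0]; norm_num
  rw [hc', Real.rpow_one]
  ring

lemma h_integral {c q : ℝ} (hc : -1 < c) (hq : -1 < q) :
    ∫ t in Set.Ioo (0:ℝ) 1, t ^ c * (1 - t ^ 2) ^ q
      = Real.Gamma ((c + 1) / 2) * Real.Gamma (q + 1)
          / Real.Gamma ((c + 1) / 2 + (q + 1)) / 2 := by
  have ha : 0 < (c + 1) / 2 := by linarith
  have hb : 0 < q + 1 := by linarith
  have hbeta := real_beta ha hb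
  have hsub := integral_sq_smul (fun u => u ^ ((c + 1) / 2 - 1) * (1 - u) ^ (q + 1 - 1))
  have e1 : (c + 1) / 2 - 1 = (c - 1) / 2 := by ring
  have e2 : q + 1 - 1 = q := by ring
  rw [e1, e2] at hsub
  rw [setIntegral_congr_fun measurableSet_Ioo sq_pointwise] at hsub
  rw [MeasureTheory.integral_const_mul] at hsub
  rw [e1, e2, hsub] at hbeta
  linarith [hbeta]

lemma h_integrable {c q : ℝ} (hc : -1 < c) (hq : -1 < q) :
    IntegrableOn (fun t : ℝ => t ^ c * (1 - t ^ 2) ^ q) (Set.Ioo (0:ℝ) 1) := by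
  have ha : 0 < (c + 1) / 2 := by linarith
  have hb : 0 < q + 1 := by linarith
  have h := (integrableOn_sq_iff
    (fun u => u ^ ((c + 1) / 2 - 1) * (1 - u) ^ (q + 1 - 1))).mp
    (by simpa using real_beta_integrable ha hb)
  have e1 : (c + 1) / 2 - 1 = (c - 1) / 2 := by ring
  have e2 : q + 1 - 1 = q := by ring
  rw [e1, e2] at h
  have h2 := h.congr_fun sq_pointwise measurableSet_Ioo
  have h3 : IntegrableOn (fun t : ℝ => (1/2 : ℝ) * (2 * (t ^ c * (1 - t ^ 2) ^ q)))
      (Set.Ioo (0:ℝ) 1) := h2.const_mul _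
  refine h3.congr_fun (fun t ht => ?_) measurableSet_Ioo
  ring


variable {α β : ℝ}

lemma hj_integrable (hα : -(1/2:ℝ) < α) (hβ : α < β) (j : ℕ) :
    IntegrableOn (fun t : ℝ => t ^ j * (1 - t ^ 2) ^ (β - α - 1) * t ^ (2 * α + 1))
      (Set.Ioo (0:ℝ) 1) := by
  have hc : (-1:ℝ) < (j:ℝ) + (2 * α + 1) := by
    have : (0:ℝ) ≤ (j:ℝ) := Nat.cast_nonneg j
    linarith
  have hq : (-1:ℝ) < β - α - 1 := by linarith
  refine (h_integrable hc hq).congr_fun (fun t ht => ?_) measurableSet_Ioo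
  obtain ⟨ht0, ht1⟩ := ht
  beta_reduce
  rw [Real.rpow_add ht0 (j:ℝ) (2 * α + 1), Real.rpow_natCast]
  ring

lemma hj_integral (hα : -(1/2:ℝ) < α) (hβ : α < β) (j : ℕ) :
    ∫ t in Set.Ioo (0:ℝ) 1, t ^ j * (1 - t ^ 2) ^ (β - α - 1) * t ^ (2 * α + 1)
      = Real.Gamma ((j:ℝ) / 2 + α + 1) * Real.Gamma (β - α)
          / Real.Gamma ((j:ℝ) / 2 + β + 1) / 2 := by
  have hc : (-1:ℝ) < (j:ℝ) + (2 * α + 1) := by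
    have : (0:ℝ) ≤ (j:ℝ) := Nat.cast_nonneg j
    linarith
  have hq : (-1:ℝ) < β - α - 1 := by linarith
  have e : ∫ t in Set.Ioo (0:ℝ) 1, t ^ j * (1 - t ^ 2) ^ (β - α - 1) * t ^ (2 * α + 1)
      = ∫ t in Set.Ioo (0:ℝ) 1, t ^ ((j:ℝ) + (2 * α + 1)) * (1 - t ^ 2) ^ (β - α - 1) := by
    refine setIntegral_congr_fun measurableSet_Ioo (fun t ht => ?_)
    obtain ⟨ht0, ht1⟩ := ht
    rw [Real.rpow_add ht0 (j:ℝ) (2 * α + 1), Real.rpow_natCast]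
    ring
  rw [e, h_integral hc hq]
  rw [show ((j:ℝ) + (2 * α + 1) + 1) / 2 = (j:ℝ) / 2 + α + 1 by ring,
    show β - α - 1 + 1 = β - α by ring,
    show (j:ℝ) / 2 + α + 1 + (β - α) = (j:ℝ) / 2 + β + 1 by ring]

lemma F_eq_on (n : ℕ) : ∀ t ∈ Set.Ioo (0:ℝ) 1,
    t ^ n * ((1 - t ^ 2) ^ (β - α - 1) * (1 + t) * |t| ^ (2 * α + 1))
      = t ^ n * (1 - t ^ 2) ^ (β - α - 1) * t ^ (2 * α + 1)
        + t ^ (n + 1) * (1 - t ^ 2) ^ (β - α - 1) * t ^ (2 * α + 1) := by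
  rintro t ⟨ht0, ht1⟩
  rw [abs_of_pos ht0, pow_succ]
  ring

lemma Fneg_eq_on (n : ℕ) : ∀ t ∈ Set.Ioo (0:ℝ) 1,
    (-t) ^ n * ((1 - t ^ 2) ^ (β - α - 1) * (1 + -t) * |t| ^ (2 * α + 1))
      = (-1) ^ n * (t ^ n * (1 - t ^ 2) ^ (β - α - 1) * t ^ (2 * α + 1)
        - t ^ (n + 1) * (1 - t ^ 2) ^ (β - α - 1) * t ^ (2 * α + 1)) := by
  rintro t ⟨ht0, ht1⟩
  rw [abs_of_pos ht0, neg_pow t n, pow_succ]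
  ring

lemma F_integrableOn_pos (hα : -(1/2:ℝ) < α) (hβ : α < β) (n : ℕ) :
    IntegrableOn
      (fun t : ℝ => t ^ n * ((1 - t ^ 2) ^ (β - α - 1) * (1 + t) * |t| ^ (2 * α + 1)))
      (Set.Ioo (0:ℝ) 1) := by
  have h : IntegrableOn
      (fun t : ℝ => t ^ n * (1 - t ^ 2) ^ (β - α - 1) * t ^ (2 * α + 1)
        + t ^ (n + 1) * (1 - t ^ 2) ^ (β - α - 1) * t ^ (2 * α + 1)) (Set.Ioo (0:ℝ) 1) :=
    (hj_integrable hα hβ n).add (hj_integrable hα hβ (n + 1))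
  exact h.congr_fun (fun t ht => (F_eq_on n t ht).symm) measurableSet_Ioo

lemma Fneg_integrableOn_pos (hα : -(1/2:ℝ) < α) (hβ : α < β) (n : ℕ) :
    IntegrableOn
      (fun t : ℝ => (-t) ^ n * ((1 - t ^ 2) ^ (β - α - 1) * (1 + -t) * |t| ^ (2 * α + 1)))
      (Set.Ioo (0:ℝ) 1) := by
  have h : IntegrableOn
      (fun t : ℝ => (-1:ℝ) ^ n * (t ^ n * (1 - t ^ 2) ^ (β - α - 1) * t ^ (2 * α + 1)
        - t ^ (n + 1) * (1 - t ^ 2) ^ (β - α - 1) * t ^ (2 * α + 1))) (Set.Ioo (0:ℝ) 1) :=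
    ((hj_integrable hα hβ n).sub (hj_integrable hα hβ (n + 1))).const_mul _
  exact h.congr_fun (fun t ht => (Fneg_eq_on n t ht).symm) measurableSet_Ioo

lemma F_intervalIntegrable_right (hα : -(1/2:ℝ) < α) (hβ : α < β) (n : ℕ) :
    IntervalIntegrable
      (fun t : ℝ => t ^ n * ((1 - t ^ 2) ^ (β - α - 1) * (1 + t) * |t| ^ (2 * α + 1)))
      volume 0 1 := by
  rw [intervalIntegrable_iff_integrableOn_Ioo_of_le (by norm_num : (0:ℝ) ≤ 1)]
  exact F_integrableOn_pos hα hβ n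

lemma F_intervalIntegrable_left (hα : -(1/2:ℝ) < α) (hβ : α < β) (n : ℕ) :
    IntervalIntegrable
      (fun t : ℝ => t ^ n * ((1 - t ^ 2) ^ (β - α - 1) * (1 + t) * |t| ^ (2 * α + 1)))
      volume (-1) 0 := by
  have h : IntervalIntegrable
      (fun t : ℝ => (-t) ^ n * ((1 - t ^ 2) ^ (β - α - 1) * (1 + -t) * |t| ^ (2 * α + 1)))
      volume 0 1 := by
    rw [intervalIntegrable_iff_integrableOn_Ioo_of_le (by norm_num : (0:ℝ) ≤ 1)]
    exact Fneg_integrableOn_pos hα hβ n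
  have h2 := ((IntervalIntegrable.iff_comp_neg (a := (0:ℝ)) (b := 1)
    (f := fun t : ℝ => (-t) ^ n * ((1 - t ^ 2) ^ (β - α - 1) * (1 + -t) * |t| ^ (2 * α + 1)))).mp h).symm
  simp only [neg_neg, neg_zero, abs_neg, neg_sq] at h2
  convert h2 using 2

lemma F_intervalIntegrable (hα : -(1/2:ℝ) < α) (hβ : α < β) (n : ℕ) :
    IntervalIntegrable
      (fun t : ℝ => t ^ n * ((1 - t ^ 2) ^ (β - α - 1) * (1 + t) * |t| ^ (2 * α + 1)))
      volume (-1) 1 :=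
  (F_intervalIntegrable_left hα hβ n).trans (F_intervalIntegrable_right hα hβ n)


lemma F_integral_right (hα : -(1/2:ℝ) < α) (hβ : α < β) (n : ℕ) :
    ∫ t in (0:ℝ)..1, t ^ n * ((1 - t ^ 2) ^ (β - α - 1) * (1 + t) * |t| ^ (2 * α + 1))
      = Real.Gamma ((n:ℝ) / 2 + α + 1) * Real.Gamma (β - α)
          / Real.Gamma ((n:ℝ) / 2 + β + 1) / 2
        + Real.Gamma (((n:ℝ) + 1) / 2 + α + 1) * Real.Gamma (β - α)
          / Real.Gamma (((n:ℝ) + 1) / 2 + β + 1) / 2 := by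
  rw [intervalIntegral.integral_of_le (by norm_num : (0:ℝ) ≤ 1),
    MeasureTheory.integral_Ioc_eq_integral_Ioo,
    setIntegral_congr_fun measurableSet_Ioo (F_eq_on n),
    integral_add (hj_integrable hα hβ n) (hj_integrable hα hβ (n + 1)),
    hj_integral hα hβ n, hj_integral hα hβ (n + 1)]
  push_cast
  ring

lemma F_integral_left (hα : -(1/2:ℝ) < α) (hβ : α < β) (n : ℕ) :
    ∫ t in (-1:ℝ)..0, t ^ n * ((1 - t ^ 2) ^ (β - α - 1) * (1 + t) * |t| ^ (2 * α + 1))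
      = (-1:ℝ) ^ n *
        (Real.Gamma ((n:ℝ) / 2 + α + 1) * Real.Gamma (β - α)
          / Real.Gamma ((n:ℝ) / 2 + β + 1) / 2
        - Real.Gamma (((n:ℝ) + 1) / 2 + α + 1) * Real.Gamma (β - α)
          / Real.Gamma (((n:ℝ) + 1) / 2 + β + 1) / 2) := by
  have hcomp : (∫ t in (0:ℝ)..1,
      (-t) ^ n * ((1 - t ^ 2) ^ (β - α - 1) * (1 + -t) * |t| ^ (2 * α + 1)))
      = ∫ t in (-1:ℝ)..0, t ^ n * ((1 - t ^ 2) ^ (β - α - 1) * (1 + t) * |t| ^ (2 * α + 1)) := by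
    have := intervalIntegral.integral_comp_neg (a := (0:ℝ)) (b := 1)
      (f := fun t : ℝ => t ^ n * ((1 - t ^ 2) ^ (β - α - 1) * (1 + t) * |t| ^ (2 * α + 1)))
    simpa [neg_sq] using this
  rw [← hcomp, intervalIntegral.integral_of_le (by norm_num : (0:ℝ) ≤ 1),
    MeasureTheory.integral_Ioc_eq_integral_Ioo,
    setIntegral_congr_fun measurableSet_Ioo (Fneg_eq_on n),
    MeasureTheory.integral_const_mul,
    integral_sub (hj_integrable hα hβ n) (hj_integrable hα hβ (n + 1)),
    hj_integral hα hβ n, hj_integral hα hβ (n + 1)]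
  push_cast
  ring

lemma moment (hα : -(1/2:ℝ) < α) (hβ : α < β) (n : ℕ) :
    ∫ t in (-1:ℝ)..1, t ^ n * ((1 - t ^ 2) ^ (β - α - 1) * (1 + t) * |t| ^ (2 * α + 1))
      = Real.Gamma (((n + n % 2 : ℕ):ℝ) / 2 + α + 1) * Real.Gamma (β - α)
          / Real.Gamma (((n + n % 2 : ℕ):ℝ) / 2 + β + 1) := by
  rw [← intervalIntegral.integral_add_adjacent_intervals
      (F_intervalIntegrable_left hα hβ n) (F_intervalIntegrable_right hα hβ n),
    F_integral_left hα hβ n, F_integral_right hα hβ n]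
  rcases Nat.even_or_odd n with he | ho
  · rw [Even.neg_one_pow he, Nat.even_iff.mp he]
    push_cast
    ring
  · rw [Odd.neg_one_pow ho, Nat.odd_iff.mp ho]
    push_cast
    ring

lemma coeff_key (hα : -(1/2:ℝ) < α) (hβ : α < β) (n : ℕ) :
    sonineConst α β *
      (∫ t in (-1:ℝ)..1, t ^ n * ((1 - t ^ 2) ^ (β - α - 1) * (1 + t) * |t| ^ (2 * α + 1)))
      * bCoeff β n = bCoeff α n := by
  have hΓβα : Real.Gamma (β - α) ≠ 0 := (Real.Gamma_pos_of_pos (by linarith)).ne'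
  have hΓα : Real.Gamma (α + 1) ≠ 0 := (Real.Gamma_pos_of_pos (by linarith)).ne'
  have hΓβ : Real.Gamma (β + 1) ≠ 0 := (Real.Gamma_pos_of_pos (by linarith)).ne'
  rw [moment hα hβ n, sonineConst]
  rcases Nat.even_or_odd n with ⟨m, rfl⟩ | ⟨m, rfl⟩
  · have hm : (0:ℝ) ≤ (m:ℝ) := Nat.cast_nonneg m
    have e0 : m + m = 2 * m := by ring
    rw [e0, bCoeff_two_mul, bCoeff_two_mul]
    have e1 : (2 * m + 2 * m % 2 : ℕ) = 2 * m := by omega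
    rw [e1]
    have e2 : ((2 * m : ℕ):ℝ) / 2 = (m:ℝ) := by push_cast; ring
    rw [e2]
    have hΓmβ : Real.Gamma ((m:ℝ) + β + 1) ≠ 0 :=
      (Real.Gamma_pos_of_pos (by linarith)).ne'
    field_simp
  · have hm : (0:ℝ) ≤ (m:ℝ) := Nat.cast_nonneg m
    rw [bCoeff_two_mul_add_one, bCoeff_two_mul_add_one]
    have e1 : (2 * m + 1 + (2 * m + 1) % 2 : ℕ) = 2 * (m + 1) := by omega
    rw [e1]
    have e2 : ((2 * (m + 1) : ℕ):ℝ) / 2 = (m:ℝ) + 1 := by push_cast; ring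
    rw [e2]
    have e3 : (m:ℝ) + 1 + α + 1 = (m:ℝ) + α + 2 := by ring
    have e4 : (m:ℝ) + 1 + β + 1 = (m:ℝ) + β + 2 := by ring
    rw [e3, e4]
    have hΓmβ : Real.Gamma ((m:ℝ) + β + 2) ≠ 0 :=
      (Real.Gamma_pos_of_pos (by linarith)).ne'
    field_simp


lemma bCoeff_succ_even (hα : -(1:ℝ) < α) (m : ℕ) :
    bCoeff α (2 * m + 1) = 2 * ((m:ℝ) + α + 1) * bCoeff α (2 * m) := by
  rw [bCoeff_two_mul_add_one, bCoeff_two_mul,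
    show (m:ℝ) + α + 2 = ((m:ℝ) + α + 1) + 1 by ring,
    Real.Gamma_add_one (ne_of_gt (by
      have : (0:ℝ) ≤ (m:ℝ) := Nat.cast_nonneg m
      linarith) : (m:ℝ) + α + 1 ≠ 0), pow_succ]
  ring

lemma bCoeff_succ_odd (α : ℝ) (m : ℕ) :
    bCoeff α (2 * m + 2) = 2 * ((m:ℝ) + 1) * bCoeff α (2 * m + 1) := by
  have h : 2 * m + 2 = 2 * (m + 1) := by ring
  rw [h, bCoeff_two_mul, bCoeff_two_mul_add_one, Nat.factorial_succ,
    show ((m + 1 : ℕ):ℝ) + α + 1 = (m:ℝ) + α + 2 by push_cast; ring]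
  push_cast
  ring

lemma bCoeff_succ_ge (hα : -(1/2:ℝ) < α) (n : ℕ) :
    (n:ℝ) * bCoeff α n ≤ bCoeff α (n + 1) := by
  have hα1 : (-1:ℝ) < α := by linarith
  rcases Nat.even_or_odd n with ⟨m, rfl⟩ | ⟨m, rfl⟩
  · have e : m + m = 2 * m := by ring
    rw [e, bCoeff_succ_even hα1]
    have hb := bCoeff_pos hα1 (2 * m)
    have : ((2 * m : ℕ):ℝ) = 2 * (m:ℝ) := by push_cast; ring
    rw [this]
    nlinarith
  · rw [show 2 * m + 1 + 1 = 2 * m + 2 from rfl, bCoeff_succ_odd]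
    have hb := bCoeff_pos hα1 (2 * m + 1)
    have : ((2 * m + 1 : ℕ):ℝ) = 2 * (m:ℝ) + 1 := by push_cast; ring
    rw [this]
    nlinarith

lemma summable_div_bCoeff (hα : -(1/2:ℝ) < α) {r : ℝ} (hr : 0 ≤ r) :
    Summable (fun n : ℕ => r ^ n / bCoeff α n) := by
  have hα1 : (-1:ℝ) < α := by linarith
  have hb := bCoeff_pos hα1
  refine summable_of_ratio_norm_eventually_le (r := 1/2) (by norm_num) ?_
  filter_upwards [Filter.eventually_ge_atTop (⌈2 * r⌉₊ + 1)] with n hn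
  have hn1 : 1 ≤ n := le_trans (Nat.le_add_left 1 _) hn
  have h2r : 2 * r ≤ (n:ℝ) := by
    calc 2 * r ≤ (⌈2 * r⌉₊ : ℝ) := Nat.le_ceil _
    _ ≤ (n:ℝ) := by exact_mod_cast le_trans (Nat.le_succ _) hn
  have key : 2 * r * bCoeff α n ≤ bCoeff α (n + 1) := by
    refine le_trans ?_ (bCoeff_succ_ge hα n)
    nlinarith [hb n]
  rcases eq_or_lt_of_le hr with rfl | hr'
  · rw [zero_pow (by omega : n + 1 ≠ 0), zero_div, norm_zero]
    have : (0:ℝ) ≤ (0:ℝ) ^ n / bCoeff α n := div_nonneg (pow_nonneg le_rfl n) (hb n).le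
    positivity
  · have hbn := (hb n).ne'
    have hbn1 := (hb (n + 1)).ne'
    have hpos : 0 < 2 * r * bCoeff α n := mul_pos (by linarith) (hb n)
    rw [Real.norm_of_nonneg (div_nonneg (pow_nonneg hr _) (hb _).le),
      Real.norm_of_nonneg (div_nonneg (pow_nonneg hr _) (hb _).le)]
    calc r ^ (n + 1) / bCoeff α (n + 1)
        ≤ r ^ (n + 1) / (2 * r * bCoeff α n) := by
          exact div_le_div_of_nonneg_left (pow_nonneg hr _) hpos key
      _ = 1 / 2 * (r ^ n / bCoeff α n) := by
          rw [pow_succ]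
          field_simp

end SonineAux

open SonineAux in
/-- Sonine product formula for the Dunkl kernel:
`E_β(λx) = a_{α,β} ∫_{-1}^1 E_α(λxt)(1-t²)^{β-α-1}(1+t)|t|^{2α+1} dt`. -/
theorem dunklKernel_sonine (α β : ℝ) (hα : -(1 / 2) < α) (hαβ : α < β)
    (lam : ℂ) (x : ℝ) :
    dunklKernel β (lam * x) =
      (sonineConst α β : ℂ) *
        ∫ t in (-1 : ℝ)..1, dunklKernel α (lam * x * t) *
          (((1 - t ^ 2) ^ (β - α - 1) * (1 + t) * |t| ^ (2 * α + 1) : ℝ) : ℂ) := by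
  have hα1 : (-1:ℝ) < α := by linarith
  have hβ1 : (-1:ℝ) < β := by linarith
  have hb := bCoeff_pos hα1
  have hbβ := bCoeff_pos hβ1
  set z : ℂ := lam * (x:ℂ) with hz
  set f : ℕ → ℝ → ℂ := fun n t =>
    (z * t) ^ n / (bCoeff α n : ℂ) *
      (((1 - t ^ 2) ^ (β - α - 1) * (1 + t) * |t| ^ (2 * α + 1) : ℝ) : ℂ) with hf
  -- integrability of real moments
  have hFint : ∀ n : ℕ, IntegrableOn
      (fun t : ℝ => t ^ n * ((1 - t ^ 2) ^ (β - α - 1) * (1 + t) * |t| ^ (2 * α + 1)))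
      (Set.Ioc (-1:ℝ) 1) := fun n => by
    have h := F_intervalIntegrable hα hαβ n
    rwa [intervalIntegrable_iff_integrableOn_Ioc_of_le (by norm_num : (-1:ℝ) ≤ 1)] at h
  have hwint : IntegrableOn
      (fun t : ℝ => (1 - t ^ 2) ^ (β - α - 1) * (1 + t) * |t| ^ (2 * α + 1))
      (Set.Ioc (-1:ℝ) 1) := by
    refine (hFint 0).congr_fun (fun t ht => ?_) measurableSet_Ioc
    simp
  have hwnn : ∀ t ∈ Set.Ioc (-1:ℝ) 1,
      0 ≤ (1 - t ^ 2) ^ (β - α - 1) * (1 + t) * |t| ^ (2 * α + 1) := by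
    rintro t ⟨ht0, ht1⟩
    have h1 : (0:ℝ) ≤ 1 - t ^ 2 := by nlinarith
    have h2 : (0:ℝ) ≤ 1 + t := by linarith
    have h3 : (0:ℝ) ≤ (1 - t ^ 2) ^ (β - α - 1) := Real.rpow_nonneg h1 _
    have h4 : (0:ℝ) ≤ |t| ^ (2 * α + 1) := Real.rpow_nonneg (abs_nonneg t) _
    positivity
  -- integrability of each complex term
  have hfint : ∀ n : ℕ, IntegrableOn (f n) (Set.Ioc (-1:ℝ) 1) := fun n => by
    have h1 : IntegrableOn (fun t : ℝ => (z ^ n / (bCoeff α n : ℂ)) *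
        (((t ^ n * ((1 - t ^ 2) ^ (β - α - 1) * (1 + t) * |t| ^ (2 * α + 1)) : ℝ)) : ℂ))
        (Set.Ioc (-1:ℝ) 1) := ((hFint n).ofReal.const_mul _)
    refine h1.congr_fun (fun t ht => ?_) measurableSet_Ioc
    simp only [hf]
    push_cast
    ring
  -- norm bound for each term
  have hnorm : ∀ n : ℕ, (∫ t in Set.Ioc (-1:ℝ) 1, ‖f n t‖)
      ≤ ‖z‖ ^ n / bCoeff α n *
        ∫ t in Set.Ioc (-1:ℝ) 1, (1 - t ^ 2) ^ (β - α - 1) * (1 + t) * |t| ^ (2 * α + 1) := by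
    intro n
    rw [← MeasureTheory.integral_const_mul]
    refine setIntegral_mono_on (hfint n).norm (hwint.const_mul _) measurableSet_Ioc
      (fun t ht => ?_)
    have hwt := hwnn t ht
    have habs : |t| ≤ 1 := abs_le.mpr ⟨ht.1.le, ht.2⟩
    have h1 : ‖f n t‖ = (‖z‖ * |t|) ^ n / bCoeff α n *
        ((1 - t ^ 2) ^ (β - α - 1) * (1 + t) * |t| ^ (2 * α + 1)) := by
      simp only [hf, norm_mul, norm_div, norm_pow, Complex.norm_real, Real.norm_eq_abs]
      rw [abs_of_pos (hb n),
        abs_of_nonneg (Real.rpow_nonneg (by nlinarith [ht.1, ht.2] : (0:ℝ) ≤ 1 - t ^ 2)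
          (β - α - 1)),
        abs_of_nonneg (by linarith [ht.1] : (0:ℝ) ≤ 1 + t),
        abs_of_nonneg (Real.rpow_nonneg (abs_nonneg t) (2 * α + 1))]
    rw [h1]
    have hp : (‖z‖ * |t|) ^ n ≤ ‖z‖ ^ n := by
      apply pow_le_pow_left₀ (by positivity)
      nlinarith [norm_nonneg z, abs_nonneg t]
    refine mul_le_mul_of_nonneg_right ?_ hwt
    gcongr
    exact (hb n).le
  -- summability of the integrals of norms
  have hsummaj : Summable (fun n : ℕ => ‖z‖ ^ n / bCoeff α n *
      ∫ t in Set.Ioc (-1:ℝ) 1, (1 - t ^ 2) ^ (β - α - 1) * (1 + t) * |t| ^ (2 * α + 1)) :=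
    (summable_div_bCoeff hα (norm_nonneg z)).mul_right _
  have hsum : Summable (fun n : ℕ => ∫ t in Set.Ioc (-1:ℝ) 1, ‖f n t‖) :=
    Summable.of_nonneg_of_le (fun n => integral_nonneg fun t => norm_nonneg _) hnorm hsummaj
  have hswap := MeasureTheory.integral_tsum_of_summable_integral_norm
    (μ := volume.restrict (Set.Ioc (-1:ℝ) 1)) (F := f) hfint hsum
  have hpt : ∀ t : ℝ, (∑' n, f n t) = dunklKernel α (z * t) *
      (((1 - t ^ 2) ^ (β - α - 1) * (1 + t) * |t| ^ (2 * α + 1) : ℝ) : ℂ) := fun t => by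
    rw [dunklKernel]
    exact tsum_mul_right
  rw [intervalIntegral.integral_of_le (by norm_num : (-1:ℝ) ≤ 1)]
  have hstep : (∫ t in Set.Ioc (-1:ℝ) 1, dunklKernel α (z * t) *
      (((1 - t ^ 2) ^ (β - α - 1) * (1 + t) * |t| ^ (2 * α + 1) : ℝ) : ℂ))
      = ∑' n, ∫ t in Set.Ioc (-1:ℝ) 1, f n t := by
    rw [hswap]
    exact integral_congr_ae (ae_of_all _ fun t => (hpt t).symm)
  rw [hstep, ← tsum_mul_left, dunklKernel]
  refine tsum_congr fun n => ?_
  have hIn : (∫ t in Set.Ioc (-1:ℝ) 1, f n t) = z ^ n / (bCoeff α n : ℂ) *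
      (((∫ t in Set.Ioc (-1:ℝ) 1,
        t ^ n * ((1 - t ^ 2) ^ (β - α - 1) * (1 + t) * |t| ^ (2 * α + 1)) : ℝ)) : ℂ) := by
    have e1 : (∫ t in Set.Ioc (-1:ℝ) 1, f n t)
        = ∫ t in Set.Ioc (-1:ℝ) 1, (z ^ n / (bCoeff α n : ℂ)) *
          (((t ^ n * ((1 - t ^ 2) ^ (β - α - 1) * (1 + t) * |t| ^ (2 * α + 1)) : ℝ)) : ℂ) := by
      refine setIntegral_congr_fun measurableSet_Ioc (fun t ht => ?_)
      simp only [hf]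
      push_cast
      ring
    rw [e1, MeasureTheory.integral_const_mul]
    congr 1
    exact integral_ofReal
  have hkey := coeff_key hα hαβ n
  rw [intervalIntegral.integral_of_le (by norm_num : (-1:ℝ) ≤ 1)] at hkey
  have hkeyC : (sonineConst α β : ℂ) *
      (((∫ t in Set.Ioc (-1:ℝ) 1,
        t ^ n * ((1 - t ^ 2) ^ (β - α - 1) * (1 + t) * |t| ^ (2 * α + 1)) : ℝ)) : ℂ) *
      (bCoeff β n : ℂ) = (bCoeff α n : ℂ) := by exact_mod_cast hkey
  have hbαC : ((bCoeff α n : ℝ) : ℂ) ≠ 0 := by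
    exact_mod_cast (hb n).ne'
  have hbβC : ((bCoeff β n : ℝ) : ℂ) ≠ 0 := by
    exact_mod_cast (hbβ n).ne'
  rw [hIn]
  set IR : ℝ := ∫ t in Set.Ioc (-1:ℝ) 1,
    t ^ n * ((1 - t ^ 2) ^ (β - α - 1) * (1 + t) * |t| ^ (2 * α + 1)) with hIR
  have h2 : (sonineConst α β : ℂ) * (IR : ℂ) = (bCoeff α n : ℂ) / (bCoeff β n : ℂ) := by
    rw [eq_div_iff hbβC]
    linear_combination hkeyC
  calc z ^ n / (bCoeff β n : ℂ)
      = z ^ n / (bCoeff α n : ℂ) * ((bCoeff α n : ℂ) / (bCoeff β n : ℂ)) := by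
        rw [div_mul_div_comm, div_eq_div_iff hbβC (mul_ne_zero hbαC hbβC)]
        ring
    _ = z ^ n / (bCoeff α n : ℂ) * ((sonineConst α β : ℂ) * (IR : ℂ)) := by rw [h2]
    _ = (sonineConst α β : ℂ) * (z ^ n / (bCoeff α n : ℂ) * (IR : ℂ)) := by ring
end
end

section
/- Let α, β be real numbers with -1/2 < α < β and let n ∈ ℕ. Then ∫_{-1}^{1} t^{2n}(1-t²)^{β-α-1}(1+t)|t|^{2α+1} dt = Γ(β-α)Γ(n+α+1)/Γ(n+β+1), and ∫_{-1}^{1} t^{2n+1}(1-t²)^{β-α-1}(1+t)|t|^{2α+1} dt = Γ(β-α)Γ(n+α+2)/Γ(n+β+2). -/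
open MeasureTheory Filter
open scoped Real

noncomputable section

open intervalIntegral

lemma hInt {r s : ℝ} (hr : -1 < r) (hs : 0 < s) :
    IntervalIntegrable (fun t : ℝ => (1-t^2) ^ r * |t| ^ s) volume (-1) 1 := by
  have hc : Continuous fun t : ℝ => |t| ^ s :=
    continuous_abs.rpow_const fun t => Or.inr hs.le
  have base : ∀ c : ℝ, IntervalIntegrable (fun x : ℝ => (c - x) ^ r) volume (c-1) c := by
    intro c
    simpa using ((intervalIntegrable_rpow' (a := 0) (b := 1) hr).comp_sub_left c).symm
  have A : IntervalIntegrable (fun t : ℝ => (1-t^2) ^ r) volume 0 1 := by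
    have h1 : IntervalIntegrable (fun t : ℝ => (1-t) ^ r) volume 0 1 := by
      simpa using base 1
    have h2 : IntervalIntegrable (fun t : ℝ => (1-t) ^ r * (1+t) ^ r) volume 0 1 :=
      h1.mul_continuousOn (((continuous_const.add continuous_id).continuousOn).rpow_const
        fun x hx => Or.inl (by
          rw [Set.uIcc_of_le (by norm_num : (0:ℝ) ≤ 1)] at hx
          have := hx.1; show (1:ℝ) + x ≠ 0; exact ne_of_gt (by linarith)))
    refine h2.congr (fun x hx => ?_)
    have hx' : x ∈ Set.Ioc (0:ℝ) 1 := by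
      simpa [Set.uIoc_of_le (by norm_num : (0:ℝ) ≤ 1)] using hx
    rw [← Real.mul_rpow (by linarith [hx'.2] : (0:ℝ) ≤ 1 - x)
      (by linarith [hx'.1] : (0:ℝ) ≤ 1 + x)]
    ring_nf
  have B : IntervalIntegrable (fun t : ℝ => (1-t^2) ^ r) volume (-1) 0 := by
    have h1 : IntervalIntegrable (fun t : ℝ => (1+t) ^ r) volume (-1) 0 := by
      have := ((intervalIntegrable_rpow' (a := 0) (b := 1) hr).comp_add_right 1)
      simpa [add_comm] using this
    have h2 : IntervalIntegrable (fun t : ℝ => (1+t) ^ r * (1-t) ^ r) volume (-1) 0 :=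
      h1.mul_continuousOn (((continuous_const.sub continuous_id).continuousOn).rpow_const
        fun x hx => Or.inl (by
          rw [Set.uIcc_of_le (by norm_num : (-1:ℝ) ≤ 0)] at hx
          have := hx.2; show (1:ℝ) - x ≠ 0; exact ne_of_gt (by linarith)))
    refine h2.congr (fun x hx => ?_)
    have hx' : x ∈ Set.Ioc (-1:ℝ) 0 := by
      simpa [Set.uIoc_of_le (by norm_num : (-1:ℝ) ≤ 0)] using hx
    rw [← Real.mul_rpow (by linarith [hx'.1] : (0:ℝ) ≤ 1 + x)
      (by linarith [hx'.2] : (0:ℝ) ≤ 1 - x)]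
    ring_nf
  exact (B.trans A).mul_continuousOn hc.continuousOn

lemma realBeta {a b : ℝ} (ha : 0 < a) (hb : 0 < b) :
    ∫ x in (0:ℝ)..1, x ^ (a-1) * (1-x) ^ (b-1)
      = Real.Gamma a * Real.Gamma b / Real.Gamma (a+b) := by
  have h := Complex.Gamma_mul_Gamma_eq_betaIntegral (s := (a:ℂ)) (t := (b:ℂ))
    (by simpa using ha) (by simpa using hb)
  have hbeta : Complex.betaIntegral a b
      = ((∫ x in (0:ℝ)..1, x ^ (a-1) * (1-x) ^ (b-1) : ℝ) : ℂ) := by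
    rw [Complex.betaIntegral, ← intervalIntegral.integral_ofReal]
    refine intervalIntegral.integral_congr fun x hx => ?_
    rw [Set.uIcc_of_le (by norm_num : (0:ℝ) ≤ 1)] at hx
    rw [Complex.ofReal_mul, Complex.ofReal_cpow hx.1, Complex.ofReal_cpow (by linarith [hx.2] : (0:ℝ) ≤ 1 - x)]
    push_cast
    ring
  rw [hbeta, ← Complex.ofReal_add, Complex.Gamma_ofReal, Complex.Gamma_ofReal,
    Complex.Gamma_ofReal, ← Complex.ofReal_mul, ← Complex.ofReal_mul] at h
  have := Complex.ofReal_injective h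
  have hG : Real.Gamma (a+b) ≠ 0 := (Real.Gamma_pos_of_pos (by linarith)).ne'
  field_simp
  linarith [this]

lemma sqImage : (fun t : ℝ => t ^ 2) '' Set.Ioo 0 1 = Set.Ioo 0 1 := by
  ext u
  simp only [Set.mem_image, Set.mem_Ioo]
  constructor
  · rintro ⟨t, ⟨ht0, ht1⟩, rfl⟩
    exact ⟨pow_pos ht0 2, pow_lt_one₀ ht0.le ht1 two_ne_zero⟩
  · rintro ⟨hu0, hu1⟩
    exact ⟨Real.sqrt u, ⟨Real.sqrt_pos.mpr hu0,
      by rw [show (1:ℝ) = Real.sqrt 1 by simp]; exact Real.sqrt_lt_sqrt hu0.le hu1⟩, Real.sq_sqrt hu0.le⟩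

lemma sqSubstIoo {a b : ℝ} (ha : 0 < a) (hb : 0 < b) :
    ∫ u in Set.Ioo (0:ℝ) 1, u ^ (a-1) * (1-u) ^ (b-1)
      = 2 * ∫ t in Set.Ioo (0:ℝ) 1, t ^ (2*a-1) * (1-t^2) ^ (b-1) := by
  have key := integral_image_eq_integral_abs_deriv_smul (s := Set.Ioo (0:ℝ) 1)
    (f := fun t => t ^ 2) (f' := fun t => 2 * t) measurableSet_Ioo
    (fun x _ => by simpa using (hasDerivAt_pow 2 x).hasDerivWithinAt)
    (fun x hx y hy h => by simp only at h; nlinarith [hx.1, hy.1])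
    (fun u => u ^ (a-1) * (1-u) ^ (b-1))
  rw [sqImage] at key
  rw [key, ← MeasureTheory.integral_const_mul]
  refine setIntegral_congr_fun measurableSet_Ioo fun t ht => ?_
  have ht0 := ht.1
  have h1 : |2 * t| = 2 * t := abs_of_pos (by linarith)
  have h2 : (t ^ 2 : ℝ) ^ (a-1) = t ^ (2*(a-1)) := by
    rw [← Real.rpow_natCast t 2, ← Real.rpow_mul ht0.le]
    norm_num
  simp only [smul_eq_mul, h1, h2]
  rw [show (2*a - 1 : ℝ) = 1 + 2*(a-1) by ring, Real.rpow_add ht0, Real.rpow_one]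
  ring

lemma reduce (j : ℕ) {r s : ℝ} (hr : -1 < r) (hs : 0 < s) :
    ∫ t in (-1:ℝ)..1, t ^ j * ((1-t^2) ^ r * |t| ^ s)
      = ((-1:ℝ) ^ j + 1) * ∫ t in (0:ℝ)..1, t ^ j * ((1-t^2) ^ r * |t| ^ s) := by
  set f := fun t : ℝ => t ^ j * ((1-t^2) ^ r * |t| ^ s) with hf
  have fInt : IntervalIntegrable f volume (-1) 1 :=
    (hInt hr hs).continuousOn_mul (continuous_pow j).continuousOn
  have i1 : IntervalIntegrable f volume (-1) 0 := fInt.mono_set (by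
    rw [Set.uIcc_of_le (by norm_num : (-1:ℝ) ≤ 0), Set.uIcc_of_le (by norm_num : (-1:ℝ) ≤ 1)]
    exact Set.Icc_subset_Icc le_rfl (by norm_num))
  have i2 : IntervalIntegrable f volume 0 1 := fInt.mono_set (by
    rw [Set.uIcc_of_le (by norm_num : (0:ℝ) ≤ 1), Set.uIcc_of_le (by norm_num : (-1:ℝ) ≤ 1)]
    exact Set.Icc_subset_Icc (by norm_num) le_rfl)
  have h1 : ∫ t in (-1:ℝ)..0, f t = ∫ t in (0:ℝ)..1, f (-t) := by
    rw [intervalIntegral.integral_comp_neg]; norm_num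
  have h2 : ∀ t : ℝ, f (-t) = (-1) ^ j * f t := fun t => by
    show (-t) ^ j * ((1-(-t)^2) ^ r * |(-t)| ^ s) = (-1) ^ j * (t ^ j * ((1-t^2) ^ r * |t| ^ s))
    rw [neg_sq, abs_neg, neg_pow]
    ring
  rw [← integral_add_adjacent_intervals i1 i2, h1]
  simp_rw [h2]
  rw [intervalIntegral.integral_const_mul]
  ring

lemma core {α β : ℝ} (hα : -(1/2) < α) (hαβ : α < β) (m : ℕ) :
    ∫ t in (0:ℝ)..1, t ^ (2*m) * ((1-t^2) ^ (β-α-1) * |t| ^ (2*α+1))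
      = Real.Gamma (β-α) * Real.Gamma (m+α+1) / (2 * Real.Gamma (m+β+1)) := by
  have ha : 0 < (m:ℝ) + α + 1 := by
    have : (0:ℝ) ≤ m := Nat.cast_nonneg m
    linarith
  have hb : 0 < β - α := by linarith
  have step1 : ∫ t in (0:ℝ)..1, t ^ (2*m) * ((1-t^2) ^ (β-α-1) * |t| ^ (2*α+1))
      = ∫ t in Set.Ioo (0:ℝ) 1, t ^ (2*((m:ℝ)+α+1)-1) * (1-t^2) ^ ((β-α)-1) := by
    rw [intervalIntegral.integral_of_le (by norm_num : (0:ℝ) ≤ 1),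
      integral_Ioc_eq_integral_Ioo]
    refine setIntegral_congr_fun measurableSet_Ioo fun t ht => ?_
    rw [abs_of_pos ht.1, show (2*((m:ℝ)+α+1)-1)
      = ((2*m : ℕ) : ℝ) + (2*α+1) by push_cast; ring, Real.rpow_add ht.1 ((2*m : ℕ) : ℝ) (2*α+1),
      Real.rpow_natCast]
    ring
  have step2 := sqSubstIoo ha hb
  have step3 : ∫ u in Set.Ioo (0:ℝ) 1, u ^ (((m:ℝ)+α+1)-1) * (1-u) ^ ((β-α)-1)
      = Real.Gamma ((m:ℝ)+α+1) * Real.Gamma (β-α) / Real.Gamma ((m:ℝ)+β+1) := by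
    rw [← integral_Ioc_eq_integral_Ioo,
      ← intervalIntegral.integral_of_le (by norm_num : (0:ℝ) ≤ 1),
      realBeta ha hb, show (m:ℝ)+α+1+(β-α) = (m:ℝ)+β+1 by ring]
  rw [step1]
  rw [step3] at step2
  have h4 : ∫ t in Set.Ioo (0:ℝ) 1, t ^ (2*((m:ℝ)+α+1)-1) * (1-t^2) ^ ((β-α)-1)
      = Real.Gamma ((m:ℝ)+α+1) * Real.Gamma (β-α) / Real.Gamma ((m:ℝ)+β+1) / 2 := by
    linarith
  rw [h4]
  ring

/-- The moment integrals `I_n(α,β)` of the Sonine kernel. -/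
theorem sonine_moment_integrals (α β : ℝ) (hα : -(1 / 2) < α) (hαβ : α < β) (n : ℕ) :
    (∫ t in (-1 : ℝ)..1,
        t ^ (2 * n) * ((1 - t ^ 2) ^ (β - α - 1) * (1 + t) * |t| ^ (2 * α + 1)) =
      Real.Gamma (β - α) * Real.Gamma (n + α + 1) / Real.Gamma (n + β + 1)) ∧
    (∫ t in (-1 : ℝ)..1,
        t ^ (2 * n + 1) * ((1 - t ^ 2) ^ (β - α - 1) * (1 + t) * |t| ^ (2 * α + 1)) =
      Real.Gamma (β - α) * Real.Gamma (n + α + 2) / Real.Gamma (n + β + 2)) := by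
  have hr : -1 < β - α - 1 := by linarith
  have hs : 0 < 2 * α + 1 := by linarith
  have intK : ∀ j : ℕ, IntervalIntegrable
      (fun t : ℝ => t ^ j * ((1 - t ^ 2) ^ (β - α - 1) * |t| ^ (2 * α + 1)))
      volume (-1) 1 :=
    fun j => (hInt hr hs).continuousOn_mul (continuous_pow j).continuousOn
  have hsplit : ∀ k : ℕ,
      (∫ t in (-1:ℝ)..1, t ^ k * ((1 - t ^ 2) ^ (β - α - 1) * (1 + t) * |t| ^ (2 * α + 1)))
        = (∫ t in (-1:ℝ)..1, t ^ k * ((1 - t ^ 2) ^ (β - α - 1) * |t| ^ (2 * α + 1)))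
          + ∫ t in (-1:ℝ)..1, t ^ (k+1) * ((1 - t ^ 2) ^ (β - α - 1) * |t| ^ (2 * α + 1)) := by
    intro k
    rw [← intervalIntegral.integral_add (intK k) (intK (k+1))]
    refine intervalIntegral.integral_congr fun t _ => ?_
    show t ^ k * ((1 - t ^ 2) ^ (β - α - 1) * (1 + t) * |t| ^ (2 * α + 1)) = _
    ring
  constructor
  · rw [hsplit (2*n), reduce (2*n) hr hs, reduce (2*n+1) hr hs,
      show ((-1:ℝ)) ^ (2*n) = 1 by rw [pow_mul]; norm_num,
      show ((-1:ℝ)) ^ (2*n+1) = -1 by rw [pow_add, pow_mul]; norm_num,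
      core hα hαβ n]
    ring
  · rw [hsplit (2*n+1), reduce (2*n+1) hr hs, reduce (2*n+1+1) hr hs,
      show ((-1:ℝ)) ^ (2*n+1) = -1 by rw [pow_add, pow_mul]; norm_num,
      show ((-1:ℝ)) ^ (2*n+1+1) = 1 by rw [show 2*n+1+1 = 2*(n+1) by ring, pow_mul]; norm_num,
      show 2*n+1+1 = 2*(n+1) by ring, core hα hαβ (n+1),
      show ((n+1:ℕ):ℝ) + α + 1 = (n:ℝ) + α + 2 by push_cast; ring,
      show ((n+1:ℕ):ℝ) + β + 1 = (n:ℝ) + β + 2 by push_cast; ring]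
    ring
end
end
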